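/- There exist real constants C ≥ 1 and δ > 0 such that for every positive integer k there exist an integer n with k ≤ n ≤ C·k and an n × k matrix E with integer entries such that for every prime number p the following holds: letting E_p denote the reduction of E modulo p, the (ℤ/pℤ)-linear map v ↦ E_p·v from (ℤ/pℤ)^k to (ℤ/pℤ)^n is injective, and every nonzero vector in its image has at least δ·n nonzero coordinates. -/

import Mathlib

open Finset

lemma red_add {p M : ℕ} (hpM : p ∣ M) [NeZero M] (a d : Fin M) :
    (((a + d : Fin M) : ℕ) : ZMod p) = ((a : ℕ) : ZMod p) + ((d : ℕ) : ZMod p) := by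
  have h : ((a + d : Fin M) : ℕ) % p = (((a : ℕ) + (d : ℕ))) % p := by
    rw [Fin.val_add]
    exact Nat.mod_mod_of_dvd _ hpM
  have := (ZMod.natCast_eq_natCast_iff _ _ p).mpr h
  push_cast at this
  exact this

lemma fiber_count {p M k : ℕ} [Fact p.Prime] (hpM : p ∣ M) (hM0 : 0 < M)
    (v : Fin k → ZMod p) (hv : v ≠ 0) :
    (univ.filter fun e : Fin k → Fin M => ∑ j, ((e j : ℕ) : ZMod p) * v j = 0).card * p
      = M ^ k := by
  classical
  haveI : NeZero M := ⟨hM0.ne'⟩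
  haveI : NeZero p := ⟨(Fact.out : p.Prime).pos.ne'⟩
  obtain ⟨j₀, hj₀⟩ : ∃ j, v j ≠ 0 := by
    by_contra h; push_neg at h; exact hv (funext h)
  set φ : (Fin k → Fin M) → ZMod p := fun e => ∑ j, ((e j : ℕ) : ZMod p) * v j with hφ
  have hsum : ∀ (e : Fin k → Fin M) (a : Fin M),
      φ (Function.update e j₀ a) = ((a : ℕ) : ZMod p) * v j₀ + ∑ j ∈ univ.erase j₀, ((e j : ℕ) : ZMod p) * v j := by
    intro e a
    rw [hφ]
    simp only
    rw [← Finset.add_sum_erase _ _ (mem_univ j₀), Function.update_self]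
    congr 1
    refine Finset.sum_congr rfl fun j hj => ?_
    rw [Function.update_of_ne (Finset.ne_of_mem_erase hj)]
  have hfib : ∀ c : ZMod p,
      (univ.filter fun e => φ e = c).card = (univ.filter fun e => φ e = 0).card := by
    intro c
    have hpleM : p ≤ M := Nat.le_of_dvd hM0 hpM
    set w : ZMod p := (v j₀)⁻¹ * c with hw
    set d : Fin M := ⟨w.val, lt_of_lt_of_le (ZMod.val_lt w) hpleM⟩ with hd
    have hdred : ((d : ℕ) : ZMod p) = w := ZMod.natCast_rightInverse w
    have hwv : w * v j₀ = c := by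
      rw [hw, mul_comm (v j₀)⁻¹ c, mul_assoc, inv_mul_cancel₀ hj₀, mul_one]
    have hsplit : ∀ e : Fin k → Fin M,
        φ e = ((e j₀ : ℕ) : ZMod p) * v j₀ + ∑ j ∈ univ.erase j₀, ((e j : ℕ) : ZMod p) * v j := by
      intro e
      rw [hφ]
      simp only
      rw [← Finset.add_sum_erase _ _ (mem_univ j₀)]
    refine Finset.card_bij' (fun e _ => Function.update e j₀ (e j₀ - d))
      (fun e _ => Function.update e j₀ (e j₀ + d)) ?_ ?_ ?_ ?_
    · intro e he
      simp only [mem_filter, mem_univ, true_and] at he ⊢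
      rw [hsum]
      have : (((e j₀ - d : Fin M) : ℕ) : ZMod p) = ((e j₀ : ℕ) : ZMod p) - ((d : ℕ) : ZMod p) := by
        have h2 := red_add (M := M) hpM (e j₀ - d) d
        rw [sub_add_cancel] at h2
        rw [h2]; ring
      rw [this, hdred, sub_mul, hwv]
      rw [hsplit] at he
      rw [sub_add_eq_add_sub, he, sub_self]
    · intro e he
      simp only [mem_filter, mem_univ, true_and] at he ⊢
      rw [hsum, red_add hpM, hdred, add_mul, hwv]
      rw [hsplit] at he
      rw [add_right_comm, he, zero_add]
    · intro e _
      simp only [Function.update_idem, Function.update_self, sub_add_cancel,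
        Function.update_eq_self]
    · intro e _
      simp only [Function.update_idem, Function.update_self, add_sub_cancel_right,
        Function.update_eq_self]
  have hcard : Fintype.card (Fin k → Fin M) = M ^ k := by
    simp [Fintype.card_fun]
  have := Finset.card_eq_sum_card_fiberwise
    (f := φ) (s := (univ : Finset (Fin k → Fin M))) (t := (univ : Finset (ZMod p)))
    (fun x _ => mem_univ _)
  rw [card_univ, hcard] at this
  rw [this]
  rw [Finset.sum_congr rfl (fun c _ => hfib c), Finset.sum_const, card_univ, ZMod.card]
  ring

lemma count_rows {ι α : Type*} [Fintype ι] [DecidableEq ι] [Fintype α] [DecidableEq α]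
    (T : Finset ι) (P : α → Prop) [DecidablePred P] :
    (univ.filter fun f : ι → α => ∀ i ∈ T, P (f i)).card
      = (univ.filter P).card ^ T.card * (Fintype.card α) ^ (Fintype.card ι - T.card) := by
  classical
  have hset : (univ.filter fun f : ι → α => ∀ i ∈ T, P (f i))
      = Fintype.piFinset (fun i => if i ∈ T then univ.filter P else univ) := by
    ext f
    simp only [mem_filter, mem_univ, true_and, Fintype.mem_piFinset]
    constructor
    · intro h i
      by_cases hi : i ∈ T
      · simp only [hi, if_true, mem_filter, mem_univ, true_and]; exact h i hi
      · simp [hi]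
    · intro h i hi
      have := h i
      simp only [hi, if_true, mem_filter, mem_univ, true_and] at this
      exact this
  rw [hset, Fintype.card_piFinset]
  rw [← Finset.prod_filter_mul_prod_filter_not univ (· ∈ T)]
  have h1 : Finset.univ.filter (· ∈ T) = T := Finset.filter_univ_mem T
  have h2 : ∀ i ∈ T, (if i ∈ T then univ.filter P else univ).card = (univ.filter P).card := by
    intro i hi; rw [if_pos hi]
  have h3 : ∀ i ∈ univ.filter (¬ · ∈ T), (if i ∈ T then univ.filter P else univ).card
      = Fintype.card α := by
    intro i hi
    simp only [mem_filter, mem_univ, true_and] at hi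
    rw [if_neg hi, card_univ]
  rw [h1, Finset.prod_congr rfl h2, Finset.prod_congr rfl h3, Finset.prod_const,
    Finset.prod_const]
  congr 2
  have := Finset.card_filter_add_card_filter_not (s := (univ : Finset ι)) (p := (· ∈ T))
  rw [h1] at this
  rw [card_univ] at this
  omega

lemma vandermonde_weight {p k : ℕ} [Fact p.Prime] (hp : 2 * k < p)
    (v : Fin k → ZMod p) (hv : v ≠ 0) :
    k ≤ (univ.filter fun a : Fin (2 * k) =>
        ∑ j : Fin k, ((a : ℕ) : ZMod p) ^ (j : ℕ) * v j ≠ 0).card := by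
  classical
  by_contra hlt
  push_neg at hlt
  set Q : Fin (2 * k) → Prop := fun a => ∑ j : Fin k, ((a : ℕ) : ZMod p) ^ (j : ℕ) * v j = 0 with hQ
  have htot := Finset.card_filter_add_card_filter_not
    (s := (univ : Finset (Fin (2 * k)))) (p := Q)
  rw [card_univ, Fintype.card_fin] at htot
  have hZcard : k ≤ (univ.filter Q).card := by
    have : (univ.filter fun a => ¬ Q a).card < k := hlt
    omega
  obtain ⟨S, hSsub, hScard⟩ := Finset.exists_subset_card_eq hZcard
  set x : Fin k → ZMod p := fun i => ((S.orderEmbOfFin hScard i : Fin (2 * k)) : ℕ) with hx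
  set W := Matrix.vandermonde x with hW
  have hWv : W.mulVec v = 0 := by
    funext i
    have hmem : S.orderEmbOfFin hScard i ∈ S := Finset.orderEmbOfFin_mem S hScard i
    have hQi : Q (S.orderEmbOfFin hScard i) := (Finset.mem_filter.mp (hSsub hmem)).2
    simp only [Matrix.mulVec, dotProduct, hW, Matrix.vandermonde_apply, hx]
    simpa [hQ] using hQi
  have hdet : IsUnit W.det := by
    rw [hW, Matrix.det_vandermonde, isUnit_iff_ne_zero]
    rw [Finset.prod_ne_zero_iff]
    intro i _
    rw [Finset.prod_ne_zero_iff]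
    intro j hj
    have hij : i < j := Finset.mem_Ioi.mp hj
    have hlt2 : (S.orderEmbOfFin hScard i : Fin (2 * k)) < S.orderEmbOfFin hScard j :=
      (S.orderEmbOfFin hScard).strictMono hij
    set a : ℕ := ((S.orderEmbOfFin hScard i : Fin (2 * k)) : ℕ)
    set b : ℕ := ((S.orderEmbOfFin hScard j : Fin (2 * k)) : ℕ)
    have hab : a < b := hlt2
    have hb2k : b < 2 * k := (S.orderEmbOfFin hScard j : Fin (2 * k)).isLt
    have : x j - x i = ((b - a : ℕ) : ZMod p) := by
      rw [hx]
      push_cast [Nat.cast_sub hab.le]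
      ring
    rw [this]
    rw [Ne, ZMod.natCast_eq_zero_iff]
    intro hdvd
    have h0 : 0 < b - a := by omega
    have := Nat.le_of_dvd h0 hdvd
    omega
  have h1 : W⁻¹.mulVec (W.mulVec v) = v := by
    rw [Matrix.mulVec_mulVec, Matrix.nonsing_inv_mul _ hdet, Matrix.one_mulVec]
  rw [hWv, Matrix.mulVec_zero] at h1
  exact hv h1.symm

lemma exists_good_R (k : ℕ) (hk : 0 < k) :
    ∃ R : (Fin (2 * k) × Fin 15) → (Fin k → Fin ((2 * k).factorial)),
      ∀ p : ℕ, p.Prime → p ≤ 2 * k →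
        ∀ v : Fin k → ZMod p, v ≠ 0 →
          k ≤ (univ.filter fun r : Fin (2 * k) × Fin 15 =>
              ∑ j : Fin k, ((R r j : ℕ) : ZMod p) * v j ≠ 0).card := by
  classical
  have he1 : (k + 1) * 15 = 15 * (k + 1) := by ring
  have he2 : 2 * k * 15 - 15 * (k + 1) = 30 * k - 15 * (k + 1) := by omega
  have he3 : 15 * (k + 1) + (30 * k - 15 * (k + 1)) = 30 * k := by omega
  have hk2 : k + 1 < 2 * k + 1 := by omega
  have he4 : 2 * k + 1 + 2 * k ≤ 14 * k + 15 := by omega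
  have harith : ∀ m, m < k → k + 1 ≤ 2 * k - m := by intro m hm; omega
  set M := (2 * k).factorial with hM
  have hM0 : 0 < M := Nat.factorial_pos _
  set A := (M ^ k) ^ (30 * k) with hA
  have hA0 : 0 < A := by positivity
  set P : Finset ℕ := (Finset.range (2 * k + 1)).filter Nat.Prime with hP
  -- event sets
  set Ev : (p : ℕ) → (Fin k → ZMod p) → Finset (Fin (2 * k)) →
      Finset ((Fin (2 * k) × Fin 15) → (Fin k → Fin M)) := fun p v S =>
    univ.filter (fun R => ∀ r ∈ S ×ˢ (univ : Finset (Fin 15)),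
      (fun e : Fin k → Fin M => ∑ j : Fin k, ((e j : ℕ) : ZMod p) * v j = 0) (R r)) with hEv
  set Bad : ℕ → Finset ((Fin (2 * k) × Fin 15) → (Fin k → Fin M)) := fun p =>
    (univ.filter (fun u : Fin k → Fin p => ¬ ∀ j, ((u j : ℕ) : ZMod p) = 0)).biUnion
      (fun u => (Finset.powersetCard (k + 1) (univ : Finset (Fin (2 * k)))).biUnion
        (fun S => Ev p (fun j => ((u j : ℕ) : ZMod p)) S)) with hBad
  clear_value Ev Bad
  have hcardΩ : Fintype.card ((Fin (2 * k) × Fin 15) → (Fin k → Fin M)) = A := by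
    rw [Fintype.card_fun, Fintype.card_fun, hA]
    simp only [Fintype.card_fin, Fintype.card_prod]
    ring_nf
  -- cardinality of each event
  have hEvcard : ∀ p : ℕ, p.Prime → p ≤ 2 * k → ∀ v : Fin k → ZMod p, v ≠ 0 →
      ∀ S : Finset (Fin (2 * k)), S.card = k + 1 →
      (Ev p v S).card * p ^ (15 * (k + 1)) = A := by
    intro p hp hp2k v hv S hS
    haveI : Fact p.Prime := ⟨hp⟩
    have hpM : p ∣ M := Nat.dvd_factorial hp.pos hp2k
    rw [hEv]
    simp only
    rw [count_rows (S ×ˢ (univ : Finset (Fin 15)))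
      (fun e : Fin k → Fin M => ∑ j : Fin k, ((e j : ℕ) : ZMod p) * v j = 0)]
    rw [Finset.card_product, hS]
    simp only [Fintype.card_fun, Fintype.card_fin, Fintype.card_prod, card_univ]
    have hfib := fiber_count hpM hM0 v hv
    set F := (univ.filter (fun e : Fin k → Fin M =>
      ∑ j : Fin k, ((e j : ℕ) : ZMod p) * v j = 0)).card with hF
    clear_value F
    rw [he1, he2]
    calc F ^ (15 * (k + 1)) * (M ^ k) ^ (30 * k - 15 * (k + 1)) * p ^ (15 * (k + 1))
        = (F * p) ^ (15 * (k + 1)) * (M ^ k) ^ (30 * k - 15 * (k + 1)) := by ring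
      _ = (M ^ k) ^ (15 * (k + 1)) * (M ^ k) ^ (30 * k - 15 * (k + 1)) := by rw [hfib]
      _ = (M ^ k) ^ (15 * (k + 1) + (30 * k - 15 * (k + 1))) := by rw [← pow_add]
      _ = (M ^ k) ^ (30 * k) := by rw [he3]
      _ = A := hA.symm
  -- per-prime cardinality bound
  have hprime : ∀ p ∈ P, (Bad p).card * 2 ^ (14 * k + 15) ≤ 2 ^ (2 * k) * A := by
    intro p hpP
    rw [hP, Finset.mem_filter, Finset.mem_range] at hpP
    obtain ⟨hplt, hp⟩ := hpP
    haveI : Fact p.Prime := ⟨hp⟩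
    have hp2k : p ≤ 2 * k := by omega
    have hNv : (univ.filter (fun u : Fin k → Fin p => ¬ ∀ j, ((u j : ℕ) : ZMod p) = 0)).card
        ≤ p ^ k := by
      calc (univ.filter (fun u : Fin k → Fin p => ¬ ∀ j, ((u j : ℕ) : ZMod p) = 0)).card
          ≤ (univ : Finset (Fin k → Fin p)).card := Finset.card_filter_le _ _
        _ = p ^ k := by rw [card_univ, Fintype.card_fun, Fintype.card_fin, Fintype.card_fin]
    have hNS : (Finset.powersetCard (k + 1) (univ : Finset (Fin (2 * k)))).card
        ≤ 2 ^ (2 * k) := by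
      rw [Finset.card_powersetCard, card_univ, Fintype.card_fin]
      calc (2 * k).choose (k + 1) ≤ ∑ i ∈ Finset.range (2 * k + 1), (2 * k).choose i :=
            Finset.single_le_sum (fun i _ => Nat.zero_le _) (Finset.mem_range.mpr hk2)
        _ = 2 ^ (2 * k) := Nat.sum_range_choose (2 * k)
    have hkey : (Bad p).card * p ^ (15 * (k + 1)) ≤ p ^ k * (2 ^ (2 * k) * A) := by
      have h1 : (Bad p).card ≤
          ∑ u ∈ univ.filter (fun u : Fin k → Fin p => ¬ ∀ j, ((u j : ℕ) : ZMod p) = 0),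
            ∑ S ∈ Finset.powersetCard (k + 1) (univ : Finset (Fin (2 * k))),
              (Ev p (fun j => ((u j : ℕ) : ZMod p)) S).card := by
        rw [hBad]
        refine le_trans Finset.card_biUnion_le ?_
        exact Finset.sum_le_sum (fun u _ => Finset.card_biUnion_le)
      calc (Bad p).card * p ^ (15 * (k + 1))
          ≤ (∑ u ∈ univ.filter (fun u : Fin k → Fin p => ¬ ∀ j, ((u j : ℕ) : ZMod p) = 0),
              ∑ S ∈ Finset.powersetCard (k + 1) (univ : Finset (Fin (2 * k))),
                (Ev p (fun j => ((u j : ℕ) : ZMod p)) S).card) * p ^ (15 * (k + 1)) :=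
            Nat.mul_le_mul_right _ h1
        _ = ∑ u ∈ univ.filter (fun u : Fin k → Fin p => ¬ ∀ j, ((u j : ℕ) : ZMod p) = 0),
              ∑ S ∈ Finset.powersetCard (k + 1) (univ : Finset (Fin (2 * k))),
                (Ev p (fun j => ((u j : ℕ) : ZMod p)) S).card * p ^ (15 * (k + 1)) := by
              rw [Finset.sum_mul]
              refine Finset.sum_congr rfl (fun u _ => ?_)
              rw [Finset.sum_mul]
        _ ≤ ∑ u ∈ univ.filter (fun u : Fin k → Fin p => ¬ ∀ j, ((u j : ℕ) : ZMod p) = 0),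
              ∑ _S ∈ Finset.powersetCard (k + 1) (univ : Finset (Fin (2 * k))), A := by
              refine Finset.sum_le_sum (fun u hu => Finset.sum_le_sum (fun S hS => ?_))
              rw [Finset.mem_filter] at hu
              rw [Finset.mem_powersetCard] at hS
              have hvne : (fun j => ((u j : ℕ) : ZMod p)) ≠ 0 := by
                intro h0
                exact hu.2 (fun j => congrFun h0 j)
              rw [hEvcard p hp hp2k _ hvne S hS.2]
        _ = (univ.filter (fun u : Fin k → Fin p => ¬ ∀ j, ((u j : ℕ) : ZMod p) = 0)).card *
              ((Finset.powersetCard (k + 1) (univ : Finset (Fin (2 * k)))).card * A) := by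
              simp [Finset.sum_const, mul_assoc]
        _ ≤ p ^ k * (2 ^ (2 * k) * A) :=
              Nat.mul_le_mul hNv (Nat.mul_le_mul_right _ hNS)
    have h2p : 2 ^ (14 * k + 15) * p ^ k ≤ p ^ (15 * (k + 1)) := by
      calc 2 ^ (14 * k + 15) * p ^ k ≤ p ^ (14 * k + 15) * p ^ k :=
            Nat.mul_le_mul_right _ (Nat.pow_le_pow_left hp.two_le _)
        _ = p ^ (15 * (k + 1)) := by rw [← pow_add]; congr 1; ring
    have h3 : (Bad p).card * 2 ^ (14 * k + 15) * p ^ k ≤ (2 ^ (2 * k) * A) * p ^ k := by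
      calc (Bad p).card * 2 ^ (14 * k + 15) * p ^ k
          = (Bad p).card * (2 ^ (14 * k + 15) * p ^ k) := by ring
        _ ≤ (Bad p).card * p ^ (15 * (k + 1)) := Nat.mul_le_mul_left _ h2p
        _ ≤ p ^ k * (2 ^ (2 * k) * A) := hkey
        _ = (2 ^ (2 * k) * A) * p ^ k := by ring
    exact Nat.le_of_mul_le_mul_right h3 (pow_pos hp.pos _)
  -- total bound
  have htot : (P.biUnion Bad).card < A := by
    have h1 : (P.biUnion Bad).card * 2 ^ (14 * k + 15) ≤ (2 * k + 1) * (2 ^ (2 * k) * A) := by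
      calc (P.biUnion Bad).card * 2 ^ (14 * k + 15)
          ≤ (∑ p ∈ P, (Bad p).card) * 2 ^ (14 * k + 15) :=
            Nat.mul_le_mul_right _ Finset.card_biUnion_le
        _ = ∑ p ∈ P, (Bad p).card * 2 ^ (14 * k + 15) := by rw [Finset.sum_mul]
        _ ≤ ∑ _p ∈ P, 2 ^ (2 * k) * A := Finset.sum_le_sum hprime
        _ = P.card * (2 ^ (2 * k) * A) := by rw [Finset.sum_const, smul_eq_mul]
        _ ≤ (2 * k + 1) * (2 ^ (2 * k) * A) := by
            refine Nat.mul_le_mul_right _ ?_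
            calc P.card ≤ (Finset.range (2 * k + 1)).card := Finset.card_filter_le _ _
              _ = 2 * k + 1 := Finset.card_range _
    have h2 : (2 * k + 1) * (2 ^ (2 * k) * A) < 2 ^ (14 * k + 15) * A := by
      have hlt : 2 * k + 1 < 2 ^ (2 * k + 1) := Nat.lt_two_pow_self
      calc (2 * k + 1) * (2 ^ (2 * k) * A) < 2 ^ (2 * k + 1) * (2 ^ (2 * k) * A) :=
            mul_lt_mul_of_pos_right hlt (by positivity)
        _ = 2 ^ (2 * k + 1 + 2 * k) * A := by ring
        _ ≤ 2 ^ (14 * k + 15) * A :=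
            Nat.mul_le_mul_right _ (Nat.pow_le_pow_right (by norm_num) he4)
    have h3 := lt_of_le_of_lt h1 h2
    rw [mul_comm (2 ^ (14 * k + 15)) A] at h3
    exact Nat.lt_of_mul_lt_mul_right h3
  -- extract a good R
  have hex : ∃ R : (Fin (2 * k) × Fin 15) → (Fin k → Fin M), R ∉ P.biUnion Bad := by
    by_contra h
    push_neg at h
    have hsub : (univ : Finset ((Fin (2 * k) × Fin 15) → (Fin k → Fin M))) ⊆ P.biUnion Bad :=
      fun R _ => h R
    have hc := Finset.card_le_card hsub
    rw [card_univ, hcardΩ] at hc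
    exact absurd (lt_of_le_of_lt hc htot) (lt_irrefl _)
  obtain ⟨R, hR⟩ := hex
  refine ⟨R, ?_⟩
  intro p hp hp2k v hv
  haveI : Fact p.Prime := ⟨hp⟩
  haveI : NeZero p := ⟨hp.pos.ne'⟩
  by_contra hlt
  push_neg at hlt
  apply hR
  rw [Finset.mem_biUnion]
  refine ⟨p, Finset.mem_filter.mpr ⟨Finset.mem_range.mpr (Nat.lt_succ_of_le hp2k), hp⟩, ?_⟩
  rw [hBad, Finset.mem_biUnion]
  -- pigeonhole
  set N := univ.filter (fun r : Fin (2 * k) × Fin 15 =>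
    ∑ j : Fin k, ((R r j : ℕ) : ZMod p) * v j ≠ 0) with hN
  have himg : (N.image Prod.fst).card < k := lt_of_le_of_lt (Finset.card_image_le) hlt
  have hcompl : k + 1 ≤ (N.image Prod.fst)ᶜ.card := by
    rw [Finset.card_compl, Fintype.card_fin]
    exact harith _ himg
  obtain ⟨S, hSsub, hScard⟩ := Finset.exists_subset_card_eq hcompl
  set u : Fin k → Fin p := fun j => ⟨(v j).val, ZMod.val_lt (v j)⟩ with hu
  have huv : ∀ j, ((u j : ℕ) : ZMod p) = v j := by
    intro j
    have h0 : ((u j : ℕ) : ZMod p) = (((v j).val : ℕ) : ZMod p) := rfl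
    rw [h0, ZMod.natCast_val, ZMod.cast_id]
  have humem : u ∈ univ.filter (fun u : Fin k → Fin p => ¬ ∀ j, ((u j : ℕ) : ZMod p) = 0) := by
    rw [Finset.mem_filter]
    refine ⟨mem_univ _, fun hall => hv ?_⟩
    funext j
    simp only [Pi.zero_apply]
    rw [← huv j]
    exact hall j
  refine ⟨u, humem, ?_⟩
  rw [Finset.mem_biUnion]
  refine ⟨S, Finset.mem_powersetCard_univ.mpr hScard, ?_⟩
  rw [hEv]
  simp only [Finset.mem_filter, Finset.mem_univ, true_and]
  intro r hr
  rw [Finset.mem_product] at hr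
  have hr1 : r.1 ∉ N.image Prod.fst := by
    have := hSsub hr.1
    rwa [Finset.mem_compl] at this
  simp only [huv]
  by_contra hne
  exact hr1 (Finset.mem_image.mpr ⟨r, by
    rw [hN]
    simp only [Finset.mem_filter, Finset.mem_univ, true_and]
    exact hne, rfl⟩)

theorem stmt13 :
    ∃ C δ : ℝ, 1 ≤ C ∧ 0 < δ ∧
      ∀ k : ℕ, 0 < k →
        ∃ n : ℕ, k ≤ n ∧ (n : ℝ) ≤ C * k ∧
          ∃ E : Matrix (Fin n) (Fin k) ℤ,
            ∀ p : ℕ, p.Prime →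
              (Function.Injective fun v : Fin k → ZMod p =>
                (E.map (Int.cast : ℤ → ZMod p)).mulVec v) ∧
              ∀ v : Fin k → ZMod p,
                (E.map (Int.cast : ℤ → ZMod p)).mulVec v ≠ 0 →
                  δ * n ≤ ((Finset.univ.filter
                    (fun i => (E.map (Int.cast : ℤ → ZMod p)).mulVec v i ≠ 0)).card : ℝ) := by
  refine ⟨32, 1 / 32, by norm_num, by norm_num, ?_⟩
  intro k hk
  refine ⟨32 * k, by omega, by push_cast; nlinarith [Nat.cast_nonneg (α := ℝ) k], ?_⟩
  obtain ⟨R, hR⟩ := exists_good_R k hk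
  have h32 : 32 * k = 2 * k + 2 * k * 15 := by ring
  set e : Fin (32 * k) ≃ (Fin (2 * k) ⊕ (Fin (2 * k) × Fin 15)) :=
    (finCongr h32).trans ((finSumFinEquiv (m := 2 * k) (n := 2 * k * 15)).symm.trans
      (Equiv.sumCongr (Equiv.refl _) finProdFinEquiv.symm)) with he
  set E : Matrix (Fin (32 * k)) (Fin k) ℤ := Matrix.of fun i j =>
    Sum.elim (fun a : Fin (2 * k) => ((a : ℕ) : ℤ) ^ (j : ℕ))
      (fun r : Fin (2 * k) × Fin 15 => ((R r j : ℕ) : ℤ)) (e i) with hE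
  refine ⟨E, ?_⟩
  intro p hp
  haveI : Fact p.Prime := ⟨hp⟩
  -- mulVec formula
  have hA : ∀ (v : Fin k → ZMod p) (i : Fin (32 * k)),
      (E.map (Int.cast : ℤ → ZMod p)).mulVec v i =
        Sum.elim (fun a : Fin (2 * k) => ∑ j : Fin k, ((a : ℕ) : ZMod p) ^ (j : ℕ) * v j)
          (fun r : Fin (2 * k) × Fin 15 => ∑ j : Fin k, ((R r j : ℕ) : ZMod p) * v j)
          (e i) := by
    intro v i
    simp only [Matrix.mulVec, dotProduct, Matrix.map_apply, hE, Matrix.of_apply]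
    cases h : e i with
    | inl a =>
        simp only [h, Sum.elim_inl]
        refine Finset.sum_congr rfl (fun j _ => ?_)
        push_cast
        ring
    | inr r =>
        simp only [h, Sum.elim_inr]
        refine Finset.sum_congr rfl (fun j _ => ?_)
        push_cast
        ring
  -- weight bound
  have hweight : ∀ v : Fin k → ZMod p, v ≠ 0 →
      k ≤ (univ.filter fun i : Fin (32 * k) =>
          (E.map (Int.cast : ℤ → ZMod p)).mulVec v i ≠ 0).card := by
    intro v hv
    by_cases hp2k : p ≤ 2 * k
    · have hsrc := hR p hp hp2k v hv
      refine le_trans hsrc (Finset.card_le_card_of_injOn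
        (fun r => e.symm (Sum.inr r)) ?_ ?_)
      · intro r hr
        rw [Finset.mem_coe, Finset.mem_filter] at hr ⊢
        refine ⟨mem_univ _, ?_⟩
        rw [hA, Equiv.apply_symm_apply, Sum.elim_inr]
        exact hr.2
      · intro r1 _ r2 _ h12
        have := e.symm.injective h12
        exact Sum.inr_injective this
    · push_neg at hp2k
      have hsrc := vandermonde_weight hp2k v hv
      refine le_trans hsrc (Finset.card_le_card_of_injOn
        (fun a => e.symm (Sum.inl a)) ?_ ?_)
      · intro a ha
        rw [Finset.mem_coe, Finset.mem_filter] at ha ⊢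
        refine ⟨mem_univ _, ?_⟩
        rw [hA, Equiv.apply_symm_apply, Sum.elim_inl]
        exact ha.2
      · intro a1 _ a2 _ h12
        have := e.symm.injective h12
        exact Sum.inl_injective this
  constructor
  · intro v1 v2 h12
    by_contra hne
    have hv : v1 - v2 ≠ 0 := sub_ne_zero.mpr hne
    have h12' : (E.map (Int.cast : ℤ → ZMod p)).mulVec v1
        = (E.map (Int.cast : ℤ → ZMod p)).mulVec v2 := h12
    have h0 : (E.map (Int.cast : ℤ → ZMod p)).mulVec (v1 - v2) = 0 := by
      rw [Matrix.mulVec_sub, h12', sub_self]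
    have hw := hweight _ hv
    have hpos : 0 < (univ.filter fun i : Fin (32 * k) =>
        (E.map (Int.cast : ℤ → ZMod p)).mulVec (v1 - v2) i ≠ 0).card := lt_of_lt_of_le hk hw
    obtain ⟨i, hi⟩ := Finset.card_pos.mp hpos
    rw [Finset.mem_filter] at hi
    exact hi.2 (congrFun h0 i)
  · intro v hvne
    have hv : v ≠ 0 := by
      intro h
      rw [h, Matrix.mulVec_zero] at hvne
      exact hvne rfl
    have hw := hweight v hv
    have hcast : ((k : ℕ) : ℝ) ≤ ((univ.filter fun i : Fin (32 * k) =>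
        (E.map (Int.cast : ℤ → ZMod p)).mulVec v i ≠ 0).card : ℝ) := Nat.cast_le.mpr hw
    calc (1 / 32 : ℝ) * ((32 * k : ℕ) : ℝ) = (k : ℝ) := by push_cast; ring
      _ ≤ _ := hcast
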